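/- Every 2-bounded rainbow-stable coloring f : [ℕ]² → ℕ is weakly rainbow-stable: for all x, y, either f(x,s) = f(y,s) for all but finitely many s, or f(x,s) ≠ f(y,s) for all but finitely many s. -/

import Mathlib

open Classical Filter

noncomputable section


/-- Every 2-bounded rainbow-stable coloring of pairs is weakly rainbow-stable. -/
theorem stmt7 (f : Sym2 ℕ → ℕ)
    (h2b : ∀ c : ℕ, {p : Sym2 ℕ | ¬ p.IsDiag ∧ f p = c}.encard ≤ 2)
    (hrs : ∀ x : ℕ,
      (∃ y : ℕ, y ≠ x ∧ ∀ᶠ s in atTop, f (Sym2.mk x s) = f (Sym2.mk y s)) ∨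
      (∀ᶠ s in atTop, ∀ y : ℕ, y ≠ x → y ≠ s →
        f (Sym2.mk y s) ≠ f (Sym2.mk x s))) :
    ∀ x y : ℕ,
      (∀ᶠ s in atTop, f (Sym2.mk x s) = f (Sym2.mk y s)) ∨
      (∀ᶠ s in atTop, f (Sym2.mk x s) ≠ f (Sym2.mk y s)) := by
  intro x y
  by_cases hxy : x = y
  · left; subst hxy; filter_upwards with s using rfl
  rcases hrs x with ⟨z, hzx, hz⟩ | hb
  · by_cases hzy : z = y
    · left; subst hzy; exact hz
    · right
      filter_upwards [hz, eventually_gt_atTop (max x (max y z))] with s hs hgt heq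
      have hsx : x ≠ s := by omega
      have hsy : y ≠ s := by
        have : y < s := lt_of_le_of_lt (le_max_of_le_right (le_max_left _ _)) hgt
        omega
      have hsz : z ≠ s := by
        have : z < s := lt_of_le_of_lt (le_max_of_le_right (le_max_right _ _)) hgt
        omega
      have hd1 : Sym2.mk x s ≠ Sym2.mk y s := by
        simp [Sym2.eq_iff]; tauto
      have hd2 : Sym2.mk x s ≠ Sym2.mk z s := by
        simp [Sym2.eq_iff]; tauto
      have hd3 : Sym2.mk y s ≠ Sym2.mk z s := by
        simp [Sym2.eq_iff]; tauto
      have hsub : ({Sym2.mk x s, Sym2.mk y s, Sym2.mk z s} : Set (Sym2 ℕ)) ⊆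
          {p : Sym2 ℕ | ¬ p.IsDiag ∧ f p = f (Sym2.mk x s)} := by
        intro p hp
        rcases hp with h | h | h <;> subst h <;>
          simp_all [Sym2.mk_isDiag_iff]
      have h3 : ({Sym2.mk x s, Sym2.mk y s, Sym2.mk z s} : Set (Sym2 ℕ)).encard = 3 := by
        rw [Set.encard_insert_of_notMem (by simp [hd1, hd2]),
          Set.encard_pair hd3]
        rfl
      have hle := (Set.encard_mono hsub).trans (h2b (f (Sym2.mk x s)))
      rw [h3] at hle
      norm_num at hle
  · right
    filter_upwards [hb, eventually_gt_atTop (max x y)] with s hs hgt heq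
    have hys : y ≠ s := by
      have : y < s := lt_of_le_of_lt (le_max_right _ _) hgt
      omega
    exact hs y (fun h => hxy h.symm) hys heq.symm

end
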